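/- Let P_{XY} be a joint pmf on finite alphabets 𝒳×𝒴 with P_X(x)>0 for every x∈𝒳. Let g:[0,1]→[0,∞) satisfy: g(0)=0, g is continuous at 0, and 0 < sup_{p∈[0,1]} g(p) < ∞. Then the opportunistic maximal g-leakage satisfies log Σ_{y:P_Y(y)>0} P_Y(y) · ( sup over finite alphabets 𝒰 and channels P_{U|X} of G_g(P_{U|Y=y}) / G_g(P_U) ) = log Σ_{y:P_Y(y)>0} max_{x∈𝒳} P_{Y|X}(y|x), i.e., it equals the Sibson mutual information of order ∞, I_∞^S(X;Y). Here P_{U|Y=y}(u)=Σ_x P_{X|Y}(x|y)P_{U|X}(u|x) and P_U(u)=Σ_x P_X(x)P_{U|X}(u|x). -/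

import Mathlib

open Finset

/-- A probability mass function on a finite type. -/
def IsPMF {α : Type*} [Fintype α] (p : α → ℝ) : Prop :=
  (∀ a, 0 ≤ p a) ∧ ∑ a, p a = 1

/-- A channel (row-stochastic kernel). -/
def IsChannel {X U : Type*} [Fintype U] (K : X → U → ℝ) : Prop :=
  ∀ x, IsPMF (K x)

/-- The pmf induced on `U` by a pmf `P` on `X` and a channel `K`. -/
noncomputable def push {X U : Type*} [Fintype X] (P : X → ℝ) (K : X → U → ℝ) : U → ℝ :=
  fun u => ∑ x, P x * K x u

/-- The maximal expected gain `G_g(R) = sup_{P̂} ∑_u R(u) g(P̂(u))`. -/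
noncomputable def maxGain {U : Type*} [Fintype U] (g : ℝ → ℝ) (R : U → ℝ) : ℝ :=
  sSup {v : ℝ | ∃ Ph : U → ℝ, IsPMF Ph ∧ v = ∑ u, R u * g (Ph u)}

section helpers
variable {U : Type*} [Fintype U]

lemma isPMF_le_one {p : U → ℝ} (hp : IsPMF p) (u : U) : p u ≤ 1 := by
  rw [← hp.2]
  exact Finset.single_le_sum (fun a _ => hp.1 a) (mem_univ u)

lemma isPMF_mem_Icc {p : U → ℝ} (hp : IsPMF p) (u : U) : p u ∈ Set.Icc (0:ℝ) 1 :=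
  ⟨hp.1 u, isPMF_le_one hp u⟩

lemma exists_isPMF [Nonempty U] : ∃ p : U → ℝ, IsPMF p := by
  refine ⟨fun _ => (Fintype.card U : ℝ)⁻¹, fun u => by positivity, ?_⟩
  have h : (Fintype.card U : ℝ) ≠ 0 := by
    exact_mod_cast Fintype.card_ne_zero
  simp [Finset.sum_const, Finset.card_univ, mul_inv_cancel₀ h]

lemma gainSet_le {g : ℝ → ℝ} {B : ℝ} (hg : ∀ t ∈ Set.Icc (0:ℝ) 1, g t ≤ B)
    {R : U → ℝ} (hR : ∀ u, 0 ≤ R u) :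
    ∀ v ∈ {v : ℝ | ∃ Ph : U → ℝ, IsPMF Ph ∧ v = ∑ u, R u * g (Ph u)},
      v ≤ (∑ u, R u) * B := by
  rintro v ⟨Ph, hPh, rfl⟩
  rw [Finset.sum_mul]
  exact Finset.sum_le_sum fun u _ =>
    mul_le_mul_of_nonneg_left (hg _ (isPMF_mem_Icc hPh u)) (hR u)

lemma le_maxGain (g : ℝ → ℝ) {B : ℝ} (hg : ∀ t ∈ Set.Icc (0:ℝ) 1, g t ≤ B)
    {R : U → ℝ} (hR : ∀ u, 0 ≤ R u) {Ph : U → ℝ} (hPh : IsPMF Ph) :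
    ∑ u, R u * g (Ph u) ≤ maxGain g R :=
  le_csSup ⟨(∑ u, R u) * B, fun v hv => gainSet_le hg hR v hv⟩ ⟨Ph, hPh, rfl⟩

lemma maxGain_nonneg (g : ℝ → ℝ) (hgnn : ∀ t ∈ Set.Icc (0:ℝ) 1, 0 ≤ g t)
    {R : U → ℝ} (hR : ∀ u, 0 ≤ R u) : 0 ≤ maxGain g R := by
  apply Real.sSup_nonneg
  rintro v ⟨Ph, hPh, rfl⟩
  exact Finset.sum_nonneg fun u _ =>
    mul_nonneg (hR u) (hgnn _ (isPMF_mem_Icc hPh u))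

lemma maxGain_le {g : ℝ → ℝ} {B : ℝ} (hg : ∀ t ∈ Set.Icc (0:ℝ) 1, g t ≤ B)
    (hB : 0 ≤ B) {R : U → ℝ} (hR : ∀ u, 0 ≤ R u) (hRs : ∑ u, R u = 1) :
    maxGain g R ≤ B := by
  apply Real.sSup_le _ hB
  intro v hv
  have := gainSet_le hg hR v hv
  rwa [hRs, one_mul] at this

end helpers

section pushlem
variable {X U : Type*} [Fintype X] [Fintype U]

lemma push_nonneg {P : X → ℝ} (hP : ∀ x, 0 ≤ P x) {K : X → U → ℝ}
    (hK : IsChannel K) (u : U) : 0 ≤ push P K u :=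
  Finset.sum_nonneg fun x _ => mul_nonneg (hP x) ((hK x).1 u)

lemma push_sum {P : X → ℝ} (hP : IsPMF P) {K : X → U → ℝ} (hK : IsChannel K) :
    ∑ u, push P K u = 1 := by
  unfold push
  rw [Finset.sum_comm]
  simp only [← Finset.mul_sum]
  calc ∑ x, P x * ∑ u, K x u = ∑ x, P x := by
        refine Finset.sum_congr rfl fun x _ => by rw [(hK x).2, mul_one]
    _ = 1 := hP.2

lemma push_isPMF {P : X → ℝ} (hP : IsPMF P) {K : X → U → ℝ} (hK : IsChannel K) :
    IsPMF (push P K) :=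
  ⟨push_nonneg hP.1 hK, push_sum hP hK⟩

lemma channel_nonempty [Nonempty X] {K : X → U → ℝ} (hK : IsChannel K) : Nonempty U := by
  by_contra h
  haveI : IsEmpty U := not_nonempty_iff.mp h
  have := (hK (Classical.arbitrary X)).2
  simp at this

end pushlem

section upper
variable {X U : Type} [Fintype X] [Fintype U] [Nonempty X]

lemma maxGain_push_ratio_le
    (g : ℝ → ℝ) (hgnn : ∀ t ∈ Set.Icc (0:ℝ) 1, 0 ≤ g t)
    {B : ℝ} (hgB : ∀ t ∈ Set.Icc (0:ℝ) 1, g t ≤ B)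
    {Q Pd : X → ℝ} (hQ : IsPMF Q) (hPd : IsPMF Pd)
    {c : ℝ} (hc0 : 0 ≤ c) (hc : ∀ x, Q x ≤ c * Pd x)
    {K : X → U → ℝ} (hK : IsChannel K) :
    maxGain g (push Q K) ≤ c * maxGain g (push Pd K) := by
  apply Real.sSup_le
  · rintro v ⟨Ph, hPh, rfl⟩
    have h1 : ∑ u, push Q K u * g (Ph u) ≤ ∑ u, c * (push Pd K u * g (Ph u)) := by
      apply Finset.sum_le_sum
      intro u _
      rw [← mul_assoc]
      apply mul_le_mul_of_nonneg_right _ (hgnn _ (isPMF_mem_Icc hPh u))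
      calc push Q K u = ∑ x, Q x * K x u := rfl
        _ ≤ ∑ x, c * (Pd x * K x u) := by
            apply Finset.sum_le_sum
            intro x _
            rw [← mul_assoc]
            exact mul_le_mul_of_nonneg_right (hc x) ((hK x).1 u)
        _ = c * push Pd K u := by rw [← Finset.mul_sum]; rfl
    rw [← Finset.mul_sum] at h1
    exact h1.trans (mul_le_mul_of_nonneg_left
      (le_maxGain g hgB (push_nonneg hPd.1 hK) hPh) hc0)
  · exact mul_nonneg hc0 (maxGain_nonneg g hgnn (push_nonneg hPd.1 hK))

end upper

lemma ratio_sup {X : Type} [Fintype X] [Nonempty X]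
    (Q Pd : X → ℝ) (hQ : IsPMF Q) (hPd : IsPMF Pd) (hpos : ∀ x, 0 < Pd x)
    (g : ℝ → ℝ)
    (hgnn : ∀ t ∈ Set.Icc (0:ℝ) 1, 0 ≤ g t)
    (hg0 : g 0 = 0)
    (hgc : ContinuousWithinAt g (Set.Icc (0:ℝ) 1) 0)
    (hgb : BddAbove (g '' Set.Icc (0:ℝ) 1))
    (hgpos : 0 < sSup (g '' Set.Icc (0:ℝ) 1)) :
    sSup {r : ℝ | ∃ (U : Type) (iU : Fintype U) (K : X → U → ℝ),
        @IsChannel X U iU K ∧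
        r = @maxGain U iU g (push Q K) / @maxGain U iU g (push Pd K)}
      = Finset.univ.sup' Finset.univ_nonempty (fun x => Q x / Pd x) := by
  classical
  set M := sSup (g '' Set.Icc (0:ℝ) 1) with hMdef
  have hgM : ∀ t ∈ Set.Icc (0:ℝ) 1, g t ≤ M := fun t ht => le_csSup hgb ⟨t, ht, rfl⟩
  set c := Finset.univ.sup' Finset.univ_nonempty (fun x => Q x / Pd x) with hcdef
  have hc_ge : ∀ x : X, Q x / Pd x ≤ c := fun x => Finset.le_sup' (fun x => Q x / Pd x) (mem_univ x)
  have hc : ∀ x, Q x ≤ c * Pd x := fun x => (div_le_iff₀ (hpos x)).mp (hc_ge x)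
  have hc0 : 0 ≤ c := by
    obtain ⟨x₀⟩ := (inferInstance : Nonempty X)
    exact le_trans (div_nonneg (hQ.1 x₀) (hpos x₀).le) (hc_ge x₀)
  set S := {r : ℝ | ∃ (U : Type) (iU : Fintype U) (K : X → U → ℝ),
        @IsChannel X U iU K ∧
        r = @maxGain U iU g (push Q K) / @maxGain U iU g (push Pd K)} with hSdef
  have hKunit : @IsChannel X Unit _ (fun _ _ => 1) := by
    intro x
    exact ⟨fun _ => zero_le_one, by simp⟩
  have hSne : S.Nonempty := ⟨_, Unit, inferInstance, (fun _ _ => 1), hKunit, rfl⟩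
  have hub : ∀ r ∈ S, r ≤ c := by
    rintro r ⟨U, iU, K, hK, rfl⟩
    have hnum := maxGain_push_ratio_le g hgnn hgM hQ hPd hc0 hc hK
    have hd0 : 0 ≤ @maxGain U iU g (push Pd K) :=
      maxGain_nonneg g hgnn (push_nonneg hPd.1 hK)
    rcases eq_or_lt_of_le hd0 with h | h
    · rw [← h, div_zero]; exact hc0
    · rw [div_le_iff₀ h]; linarith [hnum]
  apply le_antisymm
  · exact Real.sSup_le hub hc0
  · rw [le_csSup_iff ⟨c, hub⟩ hSne]
    intro b hb
    obtain ⟨xs, -, hxs⟩ := Finset.exists_mem_eq_sup' Finset.univ_nonempty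
      (fun x => Q x / Pd x)
    set a := Pd xs with hadef
    set ay := Q xs with haydef
    have ha : 0 < a := hpos xs
    have ha1 : a ≤ 1 := isPMF_le_one hPd xs
    have hay0 : 0 ≤ ay := hQ.1 xs
    have hay1 : ay ≤ 1 := isPMF_le_one hQ xs
    have hM : 0 < M := hgpos
    have key : ∀ ε ∈ Set.Ioo (0:ℝ) M, ay * (M - ε) / (a * M + ε) ≤ b := by
      rintro ε ⟨hε0, hεM⟩
      -- δ from continuity at 0
      have hev : g ⁻¹' (Set.Iio (ε/2)) ∈ nhdsWithin (0:ℝ) (Set.Icc (0:ℝ) 1) := by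
        apply hgc
        rw [hg0]
        exact Iio_mem_nhds (by positivity)
      rw [Metric.mem_nhdsWithin_iff] at hev
      obtain ⟨δ, hδ0, hδ⟩ := hev
      -- m
      obtain ⟨m, hm⟩ := exists_nat_gt (2*M/(δ*ε))
      have hm0 : 0 < m := by
        by_contra h
        push_neg at h
        interval_cases m
        · simp at hm
          nlinarith [div_pos (by linarith : (0:ℝ) < 2*M) (by positivity : (0:ℝ) < δ*ε)]
      have hmR : (0:ℝ) < m := by exact_mod_cast hm0
      have hmle : M/(δ*m) ≤ ε/2 := by
        have h2 : 2*M < m*(δ*ε) := (div_lt_iff₀ (by positivity)).mp hm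
        rw [div_le_div_iff₀ (by positivity) (by norm_num : (0:ℝ) < 2)]
        nlinarith
      -- t
      have hne : (g '' Set.Icc (0:ℝ) 1).Nonempty :=
        ⟨g 0, 0, ⟨le_refl 0, zero_le_one⟩, rfl⟩
      obtain ⟨v, ⟨t, ht, rfl⟩, hgt⟩ := exists_lt_of_lt_csSup hne
        (show M - ε < M by linarith)
      -- channel
      set K : X → Option (Fin m) → ℝ := fun x u =>
        if x = xs then (if u = none then 1 else 0)
        else (if u = none then 0 else (m:ℝ)⁻¹) with hKdef
      have hmne : (m:ℝ) ≠ 0 := ne_of_gt hmR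
      have hK : IsChannel K := by
        intro x
        by_cases hx : x = xs
        · constructor
          · intro u; simp only [hKdef, hx, if_pos rfl]; split <;> norm_num
          · rw [Fintype.sum_option]; simp [hKdef, hx]
        · constructor
          · intro u; simp only [hKdef, if_neg hx]; split
            · exact le_refl 0
            · positivity
          · rw [Fintype.sum_option]
            simp [hKdef, hx, Finset.sum_const, Finset.card_univ, mul_inv_cancel₀ hmne]
      have hpushn : ∀ (W : X → ℝ), push W K none = W xs := by
        intro W
        unfold push
        have hterm : ∀ x, W x * K x none = if x = xs then W x else 0 := by
          intro x
          simp only [hKdef]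
          split_ifs <;> simp_all
        rw [Finset.sum_congr rfl (fun x _ => hterm x),
          Finset.sum_ite_eq' Finset.univ xs W]
        simp
      have hpushs : ∀ (W : X → ℝ), IsPMF W → ∀ i : Fin m,
          push W K (some i) = (1 - W xs) * (m:ℝ)⁻¹ := by
        intro W hW i
        unfold push
        have hterm : ∀ x, W x * K x (some i)
            = W x * (m:ℝ)⁻¹ - (if x = xs then W x * (m:ℝ)⁻¹ else 0) := by
          intro x
          simp only [hKdef]
          split_ifs with h1 <;> simp_all
        rw [Finset.sum_congr rfl (fun x _ => hterm x), Finset.sum_sub_distrib,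
          ← Finset.sum_mul, hW.2, Finset.sum_ite_eq' Finset.univ xs
            (fun x => W x * (m:ℝ)⁻¹)]
        simp only [Finset.mem_univ, if_true]
        ring
      -- the lower-bound pmf
      set Ph : Option (Fin m) → ℝ := fun u => Option.casesOn u t
        (fun i => if i = (⟨0, hm0⟩ : Fin m) then 1 - t else 0) with hPhdef
      have hPh : IsPMF Ph := by
        constructor
        · rintro (_|i)
          · exact ht.1
          · show (0:ℝ) ≤ if i = (⟨0, hm0⟩ : Fin m) then 1 - t else 0
            split
            · linarith [ht.2]
            · exact le_refl 0
        · rw [Fintype.sum_option]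
          show t + (∑ i : Fin m, if i = (⟨0, hm0⟩ : Fin m) then 1 - t else 0) = 1
          rw [Finset.sum_ite_eq' Finset.univ (⟨0, hm0⟩ : Fin m) (fun _ => 1 - t)]
          simp
      have hPhran : ∀ u, Ph u ∈ Set.Icc (0:ℝ) 1 := isPMF_mem_Icc hPh
      have hval : ∀ (W : X → ℝ), IsPMF W →
          W xs * g t ≤ ∑ u, push W K u * g (Ph u) := by
        intro W hW
        rw [Fintype.sum_option]
        have h1 : push W K none * g (Ph none) = W xs * g t := by
          rw [hpushn W]
        have h2 : 0 ≤ ∑ i : Fin m, push W K (some i) * g (Ph (some i)) := by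
          apply Finset.sum_nonneg
          intro i _
          exact mul_nonneg (push_nonneg hW.1 hK _) (hgnn _ (hPhran (some i)))
        rw [h1]
        linarith
      -- numerator lower bound
      have hnum : ay * (M - ε) ≤ maxGain g (push Q K) := by
        calc ay * (M - ε) ≤ ay * g t := mul_le_mul_of_nonneg_left hgt.le hay0
          _ ≤ ∑ u, push Q K u * g (Ph u) := hval Q hQ
          _ ≤ maxGain g (push Q K) := le_maxGain g hgM (push_nonneg hQ.1 hK) hPh
      -- denominator lower bound (positivity)
      have hden_pos : 0 < maxGain g (push Pd K) := by
        have h1 : a * (M - ε) ≤ maxGain g (push Pd K) := by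
          calc a * (M - ε) ≤ a * g t := mul_le_mul_of_nonneg_left hgt.le ha.le
            _ ≤ ∑ u, push Pd K u * g (Ph u) := hval Pd hPd
            _ ≤ maxGain g (push Pd K) := le_maxGain g hgM (push_nonneg hPd.1 hK) hPh
        have : 0 < a * (M - ε) := mul_pos ha (by linarith)
        linarith
      -- denominator upper bound
      have hden_ub : maxGain g (push Pd K) ≤ a * M + ε := by
        apply Real.sSup_le _ (by positivity)
        rintro w ⟨Ph', hPh', rfl⟩
        rw [Fintype.sum_option]
        have hup : push Pd K none * g (Ph' none) ≤ a * M := by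
          rw [hpushn Pd]
          exact mul_le_mul_of_nonneg_left (hgM _ (isPMF_mem_Icc hPh' none)) ha.le
        have hSig : ∑ i : Fin m, g (Ph' (some i)) ≤ M/δ + m*(ε/2) := by
          classical
          rw [← Finset.sum_filter_add_sum_filter_not Finset.univ
            (fun i => δ ≤ Ph' (some i))]
          have hcard : ((Finset.univ.filter (fun i : Fin m => δ ≤ Ph' (some i))).card : ℝ)
              ≤ 1/δ := by
            rw [le_div_iff₀ hδ0]
            calc ((Finset.univ.filter (fun i : Fin m => δ ≤ Ph' (some i))).card : ℝ) * δ
                = ∑ _i ∈ Finset.univ.filter (fun i : Fin m => δ ≤ Ph' (some i)), δ := by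
                  rw [Finset.sum_const, nsmul_eq_mul]
              _ ≤ ∑ i ∈ Finset.univ.filter (fun i : Fin m => δ ≤ Ph' (some i)),
                    Ph' (some i) := Finset.sum_le_sum (fun i hi => (Finset.mem_filter.mp hi).2)
              _ = ∑ u ∈ (Finset.univ.filter (fun i : Fin m => δ ≤ Ph' (some i))).map
                    ⟨some, Option.some_injective _⟩, Ph' u := by rw [Finset.sum_map]; rfl
              _ ≤ ∑ u : Option (Fin m), Ph' u :=
                  Finset.sum_le_sum_of_subset_of_nonneg (Finset.subset_univ _)
                    (fun u _ _ => hPh'.1 u)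
              _ = 1 := hPh'.2
          have hfirst : ∑ i ∈ Finset.univ.filter (fun i : Fin m => δ ≤ Ph' (some i)),
              g (Ph' (some i)) ≤ M/δ := by
            calc ∑ i ∈ Finset.univ.filter (fun i : Fin m => δ ≤ Ph' (some i)),
                g (Ph' (some i))
                ≤ ∑ _i ∈ Finset.univ.filter (fun i : Fin m => δ ≤ Ph' (some i)), M :=
                  Finset.sum_le_sum (fun i _ => hgM _ (isPMF_mem_Icc hPh' _))
              _ = ((Finset.univ.filter (fun i : Fin m => δ ≤ Ph' (some i))).card : ℝ) * M := by
                  rw [Finset.sum_const, nsmul_eq_mul]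
              _ ≤ (1/δ) * M := mul_le_mul_of_nonneg_right hcard hM.le
              _ = M/δ := by ring
          have hsecond : ∑ i ∈ Finset.univ.filter (fun i : Fin m => ¬ δ ≤ Ph' (some i)),
              g (Ph' (some i)) ≤ m*(ε/2) := by
            calc ∑ i ∈ Finset.univ.filter (fun i : Fin m => ¬ δ ≤ Ph' (some i)),
                g (Ph' (some i))
                ≤ ∑ _i ∈ Finset.univ.filter (fun i : Fin m => ¬ δ ≤ Ph' (some i)), (ε/2) := by
                  apply Finset.sum_le_sum
                  intro i hi
                  have hlt : Ph' (some i) < δ := by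
                    have := (Finset.mem_filter.mp hi).2
                    linarith [not_le.mp this]
                  have hmem : Ph' (some i) ∈ Metric.ball (0:ℝ) δ ∩ Set.Icc 0 1 := by
                    constructor
                    · rw [Metric.mem_ball, Real.dist_eq, sub_zero,
                        abs_of_nonneg (hPh'.1 _)]
                      exact hlt
                    · exact isPMF_mem_Icc hPh' _
                  exact le_of_lt (hδ hmem)
              _ = ((Finset.univ.filter (fun i : Fin m => ¬ δ ≤ Ph' (some i))).card : ℝ) * (ε/2) := by
                  rw [Finset.sum_const, nsmul_eq_mul]
              _ ≤ (m:ℝ) * (ε/2) := by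
                  apply mul_le_mul_of_nonneg_right _ (by positivity)
                  have := Finset.card_filter_le Finset.univ
                    (fun i : Fin m => ¬ δ ≤ Ph' (some i))
                  rw [Finset.card_univ, Fintype.card_fin] at this
                  exact_mod_cast this
          linarith
        have hsum2 : ∑ i : Fin m, push Pd K (some i) * g (Ph' (some i)) ≤ ε := by
          have heq : ∑ i : Fin m, push Pd K (some i) * g (Ph' (some i))
              = (1 - a) * (m:ℝ)⁻¹ * ∑ i : Fin m, g (Ph' (some i)) := by
            rw [Finset.mul_sum]
            exact Finset.sum_congr rfl (fun i _ => by rw [hpushs Pd hPd i])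
          rw [heq]
          have h1a : 0 ≤ 1 - a := by linarith
          have hSig0 : 0 ≤ ∑ i : Fin m, g (Ph' (some i)) :=
            Finset.sum_nonneg (fun i _ => hgnn _ (isPMF_mem_Icc hPh' _))
          calc (1 - a) * (m:ℝ)⁻¹ * ∑ i : Fin m, g (Ph' (some i))
              ≤ 1 * (m:ℝ)⁻¹ * ∑ i : Fin m, g (Ph' (some i)) := by
                apply mul_le_mul_of_nonneg_right _ hSig0
                apply mul_le_mul_of_nonneg_right _ (by positivity)
                linarith
            _ = (m:ℝ)⁻¹ * ∑ i : Fin m, g (Ph' (some i)) := by ring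
            _ ≤ (m:ℝ)⁻¹ * (M/δ + m*(ε/2)) :=
                mul_le_mul_of_nonneg_left hSig (by positivity)
            _ = M/(δ*m) + ε/2 := by field_simp
            _ ≤ ε/2 + ε/2 := by linarith
            _ = ε := by ring
        linarith
      -- combine
      have hr : ay * (M - ε) / (a * M + ε)
          ≤ maxGain g (push Q K) / maxGain g (push Pd K) := by
        apply div_le_div₀ (le_trans (mul_nonneg hay0 (by linarith)) hnum) hnum hden_pos hden_ub
      have hmem : maxGain g (push Q K) / maxGain g (push Pd K) ∈ S :=
        ⟨Option (Fin m), inferInstance, K, hK, rfl⟩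
      exact hr.trans (hb hmem)
    -- limit argument
    have hcont : Filter.Tendsto (fun ε => ay * (M - ε) / (a * M + ε))
        (nhdsWithin 0 (Set.Ioi (0:ℝ))) (nhds (ay * (M - 0) / (a * M + 0))) := by
      apply Filter.Tendsto.mono_left _ nhdsWithin_le_nhds
      apply ContinuousAt.tendsto
      apply ContinuousAt.div
      · fun_prop
      · fun_prop
      · positivity
    have hlim : ay * (M - 0) / (a * M + 0) = c := by
      rw [sub_zero, add_zero, hcdef, hxs, mul_comm ay M, mul_comm a M,
        mul_div_mul_left _ _ (ne_of_gt hM)]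
    rw [hlim] at hcont
    apply le_of_tendsto hcont
    filter_upwards [Ioo_mem_nhdsGT_of_mem (Set.mem_Ico.mpr ⟨le_refl 0, hM⟩)] with ε hε
    exact key ε hε

/-- Under mild regularity assumptions on the gain function `g`, the
opportunistic maximal `g`-leakage equals the Sibson mutual information of order `∞`:
`log ∑_{y : P_Y(y)>0} P_Y(y) · sup_{U,P_{U|X}} G_g(P_{U|Y=y})/G_g(P_U)
  = log ∑_{y : P_Y(y)>0} max_x P_{Y|X}(y|x)`. -/
theorem stmt7 {X Y : Type} [Fintype X] [Fintype Y] [Nonempty X]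
    (P : X → Y → ℝ) (hP : IsPMF (fun z : X × Y => P z.1 z.2))
    (hPX : ∀ x, 0 < ∑ y, P x y)
    (g : ℝ → ℝ)
    (hgnn : ∀ t ∈ Set.Icc (0:ℝ) 1, 0 ≤ g t)
    (hg0 : g 0 = 0)
    (hgc : ContinuousWithinAt g (Set.Icc (0:ℝ) 1) 0)
    (hgb : BddAbove (g '' Set.Icc (0:ℝ) 1))
    (hgpos : 0 < sSup (g '' Set.Icc (0:ℝ) 1)) :
    Real.log (∑ y ∈ Finset.univ.filter (fun y => 0 < ∑ x, P x y),
        (∑ x, P x y) *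
          sSup {r : ℝ | ∃ (U : Type) (iU : Fintype U) (K : X → U → ℝ),
            @IsChannel X U iU K ∧
            r = @maxGain U iU g (push (fun x => P x y / ∑ x', P x' y) K) /
                @maxGain U iU g (push (fun x => ∑ y', P x y') K)})
      = Real.log (∑ y ∈ Finset.univ.filter (fun y => 0 < ∑ x, P x y),
          Finset.univ.sup' Finset.univ_nonempty (fun x => P x y / ∑ y', P x y')) := by
  congr 1
  apply Finset.sum_congr rfl
  intro y hy
  have hy' : 0 < ∑ x, P x y := (Finset.mem_filter.mp hy).2
  have hPY : (∑ x, P x y) ≠ 0 := ne_of_gt hy'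
  have hQ : IsPMF (fun x => P x y / ∑ x', P x' y) := by
    constructor
    · intro x; exact div_nonneg (hP.1 (x, y)) hy'.le
    · rw [← Finset.sum_div]; exact div_self hPY
  have hPd : IsPMF (fun x => ∑ y', P x y') := by
    constructor
    · intro x; exact (hPX x).le
    · have h2 := hP.2
      rw [Fintype.sum_prod_type] at h2
      exact h2
  rw [ratio_sup _ _ hQ hPd hPX g hgnn hg0 hgc hgb hgpos]
  have h1 : (∑ x, P x y) * Finset.univ.sup' Finset.univ_nonempty
        (fun x => (P x y / ∑ x', P x' y) / ∑ y', P x y')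
      = Finset.univ.sup' Finset.univ_nonempty
        (fun x => (∑ x', P x' y) * ((P x y / ∑ x', P x' y) / ∑ y', P x y')) := by
    simpa using Finset.comp_sup'_eq_sup'_comp (s := (Finset.univ : Finset X))
      Finset.univ_nonempty
      (f := fun x => (P x y / ∑ x', P x' y) / ∑ y', P x y')
      (fun r : ℝ => (∑ x, P x y) * r) (fun u v => mul_max_of_nonneg u v hy'.le)
  rw [h1]
  apply Finset.sup'_congr Finset.univ_nonempty rfl
  intro x _
  show (∑ x', P x' y) * ((P x y / ∑ x', P x' y) / ∑ y', P x y') = P x y / ∑ y', P x y'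
  have hPX' : (∑ y', P x y') ≠ 0 := ne_of_gt (hPX x)
  field_simp
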